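/- The centralizer C(X, G) of a minimal almost 1-1 extension (X, G) of a ℤ^d-odometer is abelian. -/

import Mathlib

/-- The centralizer `C(X, G)` of a minimal almost 1-1 extension
`(X, ℤ^d)` of a `ℤ^d`-odometer is abelian.  Here the `ℤ^d`-odometer is presented as a
compact metrizable abelian topological group `Y` together with a homomorphism
`ρ : ℤ^d → Y` with dense range, the action of `ℤ^d` on `Y` being translation by `ρ`,
and `π : X → Y` is an equivariant almost 1-1 factor map. -/
theorem centralizer_abelian_of_almost_one_to_one_extension {d : ℕ} {X Y : Type*}
    [MetricSpace X] [CompactSpace X]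
    [MetricSpace Y] [CompactSpace Y] [AddCommGroup Y] [IsTopologicalAddGroup Y]
    [AddAction (Fin d → ℤ) X]
    (hc : ∀ v : Fin d → ℤ, Continuous fun x : X => v +ᵥ x)
    (ρ : (Fin d → ℤ) →+ Y) (hρ : DenseRange ρ)
    (π : X → Y) (hπc : Continuous π) (hπs : Function.Surjective π)
    (hequiv : ∀ (v : Fin d → ℤ) (x : X), π (v +ᵥ x) = ρ v + π x)
    (hmin : ∀ x : X, Dense (Set.range fun v : Fin d → ℤ => v +ᵥ x))
    (x₀ : X) (hfib : π ⁻¹' {π x₀} = {x₀})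
    (φ ψ : X ≃ₜ X)
    (hφ : ∀ (v : Fin d → ℤ) (x : X), φ (v +ᵥ x) = v +ᵥ φ x)
    (hψ : ∀ (v : Fin d → ℤ) (x : X), ψ (v +ᵥ x) = v +ᵥ ψ x) :
    ∀ x : X, φ (ψ x) = ψ (φ x) := by
  -- Step 1: for any equivariant homeomorphism, x ↦ π (φ x) - π x is constant.
  have key : ∀ (θ : X ≃ₜ X), (∀ (v : Fin d → ℤ) (x : X), θ (v +ᵥ x) = v +ᵥ θ x) →
      ∀ x y : X, π (θ x) - π x = π (θ y) - π y := by
    intro θ hθ x y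
    have hg : Continuous fun z : X => π (θ z) - π z := (hπc.comp θ.continuous).sub hπc
    have hmaps : Set.MapsTo (fun z : X => π (θ z) - π z)
        (Set.range fun v : Fin d → ℤ => v +ᵥ x) {π (θ x) - π x} := by
      rintro _ ⟨v, rfl⟩
      simp only [Set.mem_singleton_iff, hθ, hequiv]
      abel
    have := map_mem_closure hg (hmin x y) hmaps
    rw [closure_singleton, Set.mem_singleton_iff] at this
    exact this.symm
  -- Step 2: π (φ (ψ x)) = π (ψ (φ x)) for all x.
  have hπcomm : ∀ x : X, π (φ (ψ x)) = π (ψ (φ x)) := by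
    intro x
    have h1 := key φ hφ (ψ x) x
    have h2 := key ψ hψ (φ x) x
    have : π (φ (ψ x)) - π (ψ x) + (π (ψ x) - π x)
        = π (ψ (φ x)) - π (φ x) + (π (φ x) - π x) := by
      rw [h1, h2, key ψ hψ x x]
      abel
    have h3 : π (φ (ψ x)) - π x = π (ψ (φ x)) - π x := by
      calc π (φ (ψ x)) - π x = π (φ (ψ x)) - π (ψ x) + (π (ψ x) - π x) := by abel
        _ = π (ψ (φ x)) - π (φ x) + (π (φ x) - π x) := this
        _ = π (ψ (φ x)) - π x := by abel
    exact sub_left_injective h3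
  -- Step 3: they agree at x₁ := ψ⁻¹ (φ⁻¹ x₀).
  set x₁ : X := ψ.symm (φ.symm x₀) with hx₁
  have hagree : φ (ψ x₁) = ψ (φ x₁) := by
    have h0 : φ (ψ x₁) = x₀ := by simp [hx₁]
    have : ψ (φ x₁) ∈ π ⁻¹' {π x₀} := by
      simp only [Set.mem_preimage, Set.mem_singleton_iff]
      rw [← hπcomm, h0]
    rw [hfib, Set.mem_singleton_iff] at this
    rw [h0, this]
  -- Step 4: agreement on the dense orbit of x₁ forces equality everywhere.
  have hext : (fun x : X => φ (ψ x)) = fun x : X => ψ (φ x) := by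
    apply Continuous.ext_on (hmin x₁)
      (φ.continuous.comp ψ.continuous) (ψ.continuous.comp φ.continuous)
    rintro _ ⟨v, rfl⟩
    simp only [Function.comp_apply, hφ, hψ, hagree]
  exact fun x => congrFun hext x
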